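/- The HOW function is differentiable on ℝ and its proximity displacement admits the closed form: for all x ∈ ℝ, x − l_{σ,c}'(x) = max{0, |x| − |x|·e^{(c²−x²)/σ²}}·sign(x); in particular this expression vanishes exactly when |x| ≤ c. -/

import Mathlib

/-- The hybrid ordinary-Welsch (HOW) function with parameters `σ, c > 0`. -/
noncomputable def how (σ c x : ℝ) : ℝ :=
  if |x| ≤ c then x ^ 2 / 2
  else σ ^ 2 / 2 * (1 - Real.exp ((c ^ 2 - x ^ 2) / σ ^ 2)) + c ^ 2 / 2

noncomputable def howD (σ c x : ℝ) : ℝ :=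
  if |x| ≤ c then x else x * Real.exp ((c ^ 2 - x ^ 2) / σ ^ 2)

lemma f_hasDerivAt (x : ℝ) : HasDerivAt (fun y : ℝ => y ^ 2 / 2) x x := by
  have := (hasDerivAt_pow 2 x).div_const 2
  refine this.congr_deriv ?_; ring

lemma g_hasDerivAt (σ c x : ℝ) (hσ : σ ≠ 0) :
    HasDerivAt (fun y => σ ^ 2 / 2 * (1 - Real.exp ((c ^ 2 - y ^ 2) / σ ^ 2)) + c ^ 2 / 2)
      (x * Real.exp ((c ^ 2 - x ^ 2) / σ ^ 2)) x := by
  have h1 : HasDerivAt (fun y : ℝ => (c ^ 2 - y ^ 2) / σ ^ 2) (-2 * x / σ ^ 2) x := by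
    have := ((hasDerivAt_pow 2 x).const_sub (c ^ 2)).div_const (σ ^ 2)
    refine this.congr_deriv ?_; ring
  have h3 := ((h1.exp.const_sub 1).const_mul (σ ^ 2 / 2)).add_const (c ^ 2 / 2)
  refine h3.congr_deriv ?_
  field_simp

lemma how_hasDerivAt (σ c : ℝ) (hσ : 0 < σ) (hc : 0 < c) (x : ℝ) :
    HasDerivAt (how σ c) (howD σ c x) x := by
  rcases lt_trichotomy |x| c with h | h | h
  · have hev : ∀ᶠ y in nhds x, how σ c y = y ^ 2 / 2 := by
      have hop : IsOpen {y : ℝ | |y| < c} := isOpen_lt continuous_abs continuous_const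
      filter_upwards [hop.mem_nhds h] with y hy
      simp [how, le_of_lt hy]
    have := (f_hasDerivAt x).congr_of_eventuallyEq hev
    simpa [howD, h.le] using this
  · have hx : x = c ∨ x = -c := abs_eq hc.le |>.mp h
    rcases hx with h1 | h1
    · obtain rfl := h1.symm
      -- x = c
      have hIic : HasDerivWithinAt (how σ c) c (Set.Iic c) c := by
        have hf := (f_hasDerivAt c).hasDerivWithinAt (s := Set.Iic c)
        have hev : ∀ᶠ y in nhdsWithin c (Set.Iic c), how σ c y = y ^ 2 / 2 := by
          filter_upwards [self_mem_nhdsWithin,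
            mem_nhdsWithin_of_mem_nhds (Ioi_mem_nhds hc)] with y hy1 hy2
          have : |y| ≤ c := abs_le.mpr ⟨by linarith [Set.mem_Ioi.mp hy2], hy1⟩
          simp [how, this]
        exact hf.congr_of_eventuallyEq hev (by simp [how, abs_of_pos hc])
      have hIci : HasDerivWithinAt (how σ c) c (Set.Ici c) c := by
        have hg := ((g_hasDerivAt σ c c hσ.ne').hasDerivWithinAt (s := Set.Ici c))
        have hval : c * Real.exp ((c ^ 2 - c ^ 2) / σ ^ 2) = c := by simp
        rw [hval] at hg
        refine hg.congr (fun y hy => ?_) (by simp [how, abs_of_pos hc])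
        rcases eq_or_lt_of_le (Set.mem_Ici.mp hy) with rfl | hy'
        · simp [how, abs_of_pos hc]
        · have : ¬ |y| ≤ c := by
            rw [abs_of_pos (lt_trans hc hy')]; linarith
          simp [how, this]
      have := hIic.union hIci
      rw [Set.Iic_union_Ici] at this
      rw [hasDerivWithinAt_univ] at this
      simpa [howD, abs_of_pos hc] using this
    · obtain rfl := h1
      -- x = -c
      have hIic : HasDerivWithinAt (how σ c) (-c) (Set.Iic (-c)) (-c) := by
        have hg := ((g_hasDerivAt σ c (-c) hσ.ne').hasDerivWithinAt (s := Set.Iic (-c)))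
        have hval : -c * Real.exp ((c ^ 2 - (-c) ^ 2) / σ ^ 2) = -c := by simp
        rw [hval] at hg
        refine hg.congr (fun y hy => ?_) (by simp [how, abs_of_pos hc])
        rcases eq_or_lt_of_le (Set.mem_Iic.mp hy) with rfl | hy'
        · simp [how, abs_of_pos hc]
        · have : ¬ |y| ≤ c := by
            rw [abs_of_neg (by linarith : y < 0)]; linarith
          simp [how, this]
      have hIci : HasDerivWithinAt (how σ c) (-c) (Set.Ici (-c)) (-c) := by
        have hf := (f_hasDerivAt (-c)).hasDerivWithinAt (s := Set.Ici (-c))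
        have hev : ∀ᶠ y in nhdsWithin (-c) (Set.Ici (-c)), how σ c y = y ^ 2 / 2 := by
          filter_upwards [self_mem_nhdsWithin,
            mem_nhdsWithin_of_mem_nhds (Iio_mem_nhds (by linarith : (-c : ℝ) < 0))]
            with y hy1 hy2
          have : |y| ≤ c := abs_le.mpr ⟨hy1, by linarith [Set.mem_Iio.mp hy2]⟩
          simp [how, this]
        exact hf.congr_of_eventuallyEq hev (by simp [how, abs_of_pos hc])
      have := hIic.union hIci
      rw [Set.Iic_union_Ici] at this
      rw [hasDerivWithinAt_univ] at this
      simpa [howD, abs_of_pos hc] using this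
  · have hev : ∀ᶠ y in nhds x,
        how σ c y = σ ^ 2 / 2 * (1 - Real.exp ((c ^ 2 - y ^ 2) / σ ^ 2)) + c ^ 2 / 2 := by
      have hop : IsOpen {y : ℝ | c < |y|} := isOpen_lt continuous_const continuous_abs
      filter_upwards [hop.mem_nhds h] with y hy
      simp [how, not_le.mpr hy]
    have := (g_hasDerivAt σ c x hσ.ne').congr_of_eventuallyEq hev
    simpa [howD, not_le.mpr h] using this

lemma key_formula (σ c : ℝ) (hσ : 0 < σ) (hc : 0 < c) (x : ℝ) :
    max 0 (|x| - |x| * Real.exp ((c ^ 2 - x ^ 2) / σ ^ 2)) * Real.sign x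
      = x - howD σ c x := by
  by_cases h : |x| ≤ c
  · have ht : 0 ≤ (c ^ 2 - x ^ 2) / σ ^ 2 := by
      apply div_nonneg _ (sq_nonneg σ)
      nlinarith [abs_nonneg x, sq_abs x]
    have hexp : 1 ≤ Real.exp ((c ^ 2 - x ^ 2) / σ ^ 2) := Real.one_le_exp ht
    have hmax : max 0 (|x| - |x| * Real.exp ((c ^ 2 - x ^ 2) / σ ^ 2)) = 0 := by
      apply max_eq_left
      nlinarith [abs_nonneg x]
    rw [hmax]
    simp [howD, h]
  · have hx : c < |x| := not_le.mp h
    have hxpos : 0 < |x| := lt_trans hc hx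
    have ht : (c ^ 2 - x ^ 2) / σ ^ 2 < 0 := by
      apply div_neg_of_neg_of_pos _ (by positivity)
      nlinarith [sq_abs x]
    have hexp : Real.exp ((c ^ 2 - x ^ 2) / σ ^ 2) < 1 := by
      rw [← Real.exp_zero]; exact Real.exp_lt_exp.mpr ht
    have hmax : max 0 (|x| - |x| * Real.exp ((c ^ 2 - x ^ 2) / σ ^ 2))
        = |x| - |x| * Real.exp ((c ^ 2 - x ^ 2) / σ ^ 2) := by
      apply max_eq_right
      nlinarith
    rw [hmax, howD, if_neg h]
    have hsx : Real.sign x * |x| = x := by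
      rcases lt_trichotomy x 0 with hx0 | rfl | hx0
      · rw [Real.sign_of_neg hx0, abs_of_neg hx0]; ring
      · simp
      · rw [Real.sign_of_pos hx0, abs_of_pos hx0]; ring
    calc (|x| - |x| * Real.exp ((c ^ 2 - x ^ 2) / σ ^ 2)) * Real.sign x
        = Real.sign x * |x| - (Real.sign x * |x|) * Real.exp ((c ^ 2 - x ^ 2) / σ ^ 2) := by
          ring
      _ = x - x * Real.exp ((c ^ 2 - x ^ 2) / σ ^ 2) := by rw [hsx]

/-- The HOW function is differentiable on ℝ, its proximity
displacement `x − l'(x)` equals `max{0, |x| − |x|·e^{(c²−x²)/σ²}}·sign(x)`,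
and this expression vanishes exactly when `|x| ≤ c`. -/
theorem how_differentiable_prox (σ c : ℝ) (hσ : 0 < σ) (hc : 0 < c) :
    (∀ x : ℝ, DifferentiableAt ℝ (how σ c) x) ∧
    (∀ x : ℝ, x - deriv (how σ c) x =
      max 0 (|x| - |x| * Real.exp ((c ^ 2 - x ^ 2) / σ ^ 2)) * Real.sign x) ∧
    (∀ x : ℝ,
      max 0 (|x| - |x| * Real.exp ((c ^ 2 - x ^ 2) / σ ^ 2)) * Real.sign x = 0 ↔
      |x| ≤ c) := by
  refine ⟨fun x => (how_hasDerivAt σ c hσ hc x).differentiableAt, fun x => ?_, fun x => ?_⟩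
  · rw [(how_hasDerivAt σ c hσ hc x).deriv, key_formula σ c hσ hc x]
  · rw [key_formula σ c hσ hc x]
    unfold howD
    by_cases h : |x| ≤ c
    · simp [h]
    · simp only [if_neg h]
      constructor
      · intro heq
        exfalso
        have hx : c < |x| := not_le.mp h
        have hxne : x ≠ 0 := by
          intro h0; rw [h0, abs_zero] at hx; linarith
        have ht : (c ^ 2 - x ^ 2) / σ ^ 2 < 0 := by
          apply div_neg_of_neg_of_pos _ (by positivity)
          nlinarith [sq_abs x]
        have hexp : Real.exp ((c ^ 2 - x ^ 2) / σ ^ 2) < 1 := by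
          rw [← Real.exp_zero]; exact Real.exp_lt_exp.mpr ht
        have : x * (1 - Real.exp ((c ^ 2 - x ^ 2) / σ ^ 2)) ≠ 0 :=
          mul_ne_zero hxne (by linarith)
        apply this
        have : x - x * Real.exp ((c ^ 2 - x ^ 2) / σ ^ 2) = 0 := by linarith [heq]
        linarith [this]
      · intro habs; exact absurd habs h
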